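/- Let prob satisfy the preflow condition on a finite rooted tree T, let D ≥ 1 be an integer, and let A ⊆ V(T). Let H be an antichain in T such that every h ∈ H has depth(h) ≥ D and, for every d ∈ {1,…,D}, an ancestor of depth d that belongs to A. Then D·∑_{h ∈ H} prob(h) ≤ ∑_{u ∈ A} prob(u). -/
import Mathlib


open Finset

private lemma iterate_le_depth' {V : Type*} (root : V) (parent : V → V) (depth : V → ℕ)
    (hroot : parent root = root)
    (hdepth : ∀ u, u ≠ root → depth u = depth (parent u) + 1) :
    ∀ (k : ℕ) (s v : V), parent^[k] s = v → ∃ k' ≤ depth s, parent^[k'] s = v := by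
  intro k
  induction k with
  | zero => exact fun s v h => ⟨0, Nat.zero_le _, h⟩
  | succ j ih =>
    intro s v h
    rw [Function.iterate_succ_apply] at h
    by_cases hs : s = root
    · have hps : parent s = s := by rw [hs, hroot, ← hs]
      rw [hps] at h
      exact ih s v h
    · obtain ⟨k', hk', hkv⟩ := ih (parent s) v h
      exact ⟨k' + 1, by rw [hdepth s hs]; omega,
        by rw [Function.iterate_succ_apply]; exact hkv⟩

private lemma flow_lemma {V : Type*} [Fintype V] [DecidableEq V]
    (root : V) (parent : V → V) (hroot : parent root = root)
    (prob : V → ℝ) (hprob_nonneg : ∀ u, 0 ≤ prob u)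
    (hpreflow : ∀ v, ∑ u ∈ univ.filter (fun u => u ≠ root ∧ parent u = v), prob u ≤ prob v) :
    ∀ (n : ℕ) (v : V) (S : Finset V),
      (∀ s ∈ S, ∃ k ≤ n, parent^[k] s = v) →
      (∀ x ∈ S, ∀ y ∈ S, x ≠ y → ¬ (∃ k : ℕ, parent^[k] y = x)) →
      ∑ s ∈ S, prob s ≤ prob v := by
  classical
  intro n
  induction n with
  | zero =>
    intro v S hanc _
    have hsub : S ⊆ {v} := by
      intro s hs
      obtain ⟨k, hk, hkv⟩ := hanc s hs
      have : k = 0 := Nat.le_zero.mp hk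
      subst this
      simpa using hkv
    calc ∑ s ∈ S, prob s ≤ ∑ s ∈ ({v} : Finset V), prob s :=
          Finset.sum_le_sum_of_subset_of_nonneg hsub (fun i _ _ => hprob_nonneg i)
      _ = prob v := Finset.sum_singleton _ _
  | succ n ih =>
    intro v S hanc hanti
    by_cases hv : v ∈ S
    · have hsub : S ⊆ {v} := by
        intro s hs
        rw [Finset.mem_singleton]
        by_contra hne
        obtain ⟨k, _, hkv⟩ := hanc s hs
        exact hanti v hv s hs (Ne.symm hne) ⟨k, hkv⟩
      calc ∑ s ∈ S, prob s ≤ ∑ s ∈ ({v} : Finset V), prob s :=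
            Finset.sum_le_sum_of_subset_of_nonneg hsub (fun i _ _ => hprob_nonneg i)
        _ = prob v := Finset.sum_singleton _ _
    · have hex : ∀ s ∈ S, ∃ k : ℕ, parent^[k] s = v := by
        intro s hs
        obtain ⟨k, _, hkv⟩ := hanc s hs
        exact ⟨k, hkv⟩
      set cfun : V → V := fun s =>
        if hs : ∃ k : ℕ, parent^[k] s = v then parent^[Nat.find hs - 1] s else s with hcfun
      have hc_def : ∀ s ∈ S, ∀ (hs : ∃ k : ℕ, parent^[k] s = v),
          cfun s = parent^[Nat.find hs - 1] s := by
        intro s _ hs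
        simp only [hcfun, dif_pos hs]
      have hfind_pos : ∀ s ∈ S, ∀ (hs : ∃ k : ℕ, parent^[k] s = v), 0 < Nat.find hs := by
        intro s hsS hs
        rcases Nat.eq_zero_or_pos (Nat.find hs) with h | h
        · exfalso
          have := Nat.find_spec hs
          rw [h] at this
          simp only [Function.iterate_zero, id_eq] at this
          exact hv (this ▸ hsS)
        · exact h
      have hparent_c : ∀ s ∈ S, parent (cfun s) = v := by
        intro s hsS
        have hs := hex s hsS
        rw [hc_def s hsS hs]
        have hspec := Nat.find_spec hs
        have hpos := hfind_pos s hsS hs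
        have : Nat.find hs = (Nat.find hs - 1) + 1 := by omega
        rw [this, Function.iterate_succ_apply'] at hspec
        exact hspec
      have hc_ne_root : ∀ s ∈ S, cfun s ≠ root := by
        intro s hsS hcr
        have hs := hex s hsS
        have hp := hparent_c s hsS
        rw [hcr, hroot] at hp
        -- hp : root = v, so cfun s = v
        have : parent^[Nat.find hs - 1] s = v := by
          rw [← hc_def s hsS hs, hcr, hp]
        have hpos := hfind_pos s hsS hs
        exact Nat.find_min hs (by omega) this
      have hmaps : ∀ s ∈ S, cfun s ∈ S.image cfun := fun s hs => Finset.mem_image_of_mem _ hs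
      have hfib : ∑ s ∈ S, prob s
          = ∑ c ∈ S.image cfun, ∑ s ∈ S.filter (fun s => cfun s = c), prob s :=
        (Finset.sum_fiberwise_of_maps_to hmaps prob).symm
      rw [hfib]
      have hstep : ∀ c ∈ S.image cfun,
          ∑ s ∈ S.filter (fun s => cfun s = c), prob s ≤ prob c := by
        intro c hc
        apply ih c
        · intro s hs
          rw [Finset.mem_filter] at hs
          obtain ⟨hsS, hsc⟩ := hs
          have hex_s := hex s hsS
          refine ⟨Nat.find hex_s - 1, ?_, ?_⟩
          · obtain ⟨k, hk, hkv⟩ := hanc s hsS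
            have := Nat.find_min' hex_s hkv
            omega
          · rw [← hc_def s hsS hex_s]
            exact hsc
        · intro x hx y hy hxy
          rw [Finset.mem_filter] at hx hy
          exact hanti x hx.1 y hy.1 hxy
      calc ∑ c ∈ S.image cfun, ∑ s ∈ S.filter (fun s => cfun s = c), prob s
          ≤ ∑ c ∈ S.image cfun, prob c := Finset.sum_le_sum hstep
        _ ≤ ∑ c ∈ univ.filter (fun u => u ≠ root ∧ parent u = v), prob c := by
            apply Finset.sum_le_sum_of_subset_of_nonneg
            · intro c hc
              obtain ⟨s, hsS, rfl⟩ := Finset.mem_image.mp hc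
              simp only [Finset.mem_filter, Finset.mem_univ, true_and]
              exact ⟨hc_ne_root s hsS, hparent_c s hsS⟩
            · exact fun i _ _ => hprob_nonneg i
        _ ≤ prob v := hpreflow v

/-- If `prob` satisfies the preflow condition on a finite
rooted tree, `H` is an antichain all of whose elements have depth at least `D`
and possess, for every `d ∈ {1,…,D}`, an ancestor of depth `d` lying in `A`,
then `D · ∑_{h ∈ H} prob h ≤ ∑_{u ∈ A} prob u`. -/
theorem stmt_7 {V : Type*} [Fintype V] [DecidableEq V]
    (root : V) (parent : V → V) (depth : V → ℕ)
    (hroot : parent root = root)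
    (hdepth_root : depth root = 0)
    (hdepth : ∀ u, u ≠ root → depth u = depth (parent u) + 1)
    (prob : V → ℝ) (hprob_nonneg : ∀ u, 0 ≤ prob u)
    (hpreflow : ∀ v, ∑ u ∈ univ.filter (fun u => u ≠ root ∧ parent u = v), prob u ≤ prob v)
    (D : ℕ) (hD : 1 ≤ D)
    (A : Finset V) (H : Finset V)
    (hanti : ∀ x ∈ H, ∀ y ∈ H, x ≠ y → ¬ (∃ k : ℕ, parent^[k] y = x))
    (hHdepth : ∀ h ∈ H, D ≤ depth h)
    (hHanc : ∀ h ∈ H, ∀ d ∈ Icc 1 D, ∃ a ∈ A, (∃ k : ℕ, parent^[k] h = a) ∧ depth a = d) :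
    (D : ℝ) * ∑ h ∈ H, prob h ≤ ∑ u ∈ A, prob u := by
  classical
  set n : ℕ := univ.sup depth with hn
  -- Step 1: for each d ∈ Icc 1 D, ∑_{h ∈ H} prob h ≤ ∑_{a ∈ A, depth a = d} prob a
  have key : ∀ d ∈ Icc 1 D,
      ∑ h ∈ H, prob h ≤ ∑ a ∈ A.filter (fun a => depth a = d), prob a := by
    intro d hd
    set g : V → V := fun h =>
      if hh : ∃ a, a ∈ A ∧ (∃ k : ℕ, parent^[k] h = a) ∧ depth a = d
      then hh.choose else h with hg
    have hgspec : ∀ h ∈ H, g h ∈ A ∧ (∃ k : ℕ, parent^[k] h = g h) ∧ depth (g h) = d := by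
      intro h hh
      have hex : ∃ a, a ∈ A ∧ (∃ k : ℕ, parent^[k] h = a) ∧ depth a = d := by
        obtain ⟨a, ha, hp⟩ := hHanc h hh d hd
        exact ⟨a, ha, hp⟩
      have : g h = hex.choose := by simp only [hg, dif_pos hex]
      rw [this]
      exact hex.choose_spec
    have hmaps : ∀ h ∈ H, g h ∈ A.filter (fun a => depth a = d) := by
      intro h hh
      obtain ⟨h1, _, h3⟩ := hgspec h hh
      exact Finset.mem_filter.mpr ⟨h1, h3⟩
    have hfib : ∑ h ∈ H, prob h
        = ∑ a ∈ A.filter (fun a => depth a = d),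
            ∑ h ∈ H.filter (fun h => g h = a), prob h :=
      (Finset.sum_fiberwise_of_maps_to hmaps prob).symm
    rw [hfib]
    apply Finset.sum_le_sum
    intro a ha
    apply flow_lemma root parent hroot prob hprob_nonneg hpreflow n a
    · intro h hh
      rw [Finset.mem_filter] at hh
      obtain ⟨hhH, hga⟩ := hh
      obtain ⟨_, ⟨k, hk⟩, _⟩ := hgspec h hhH
      rw [hga] at hk
      obtain ⟨k', hk'le, hk'v⟩ := iterate_le_depth' root parent depth hroot hdepth k h a hk
      exact ⟨k', le_trans hk'le (Finset.le_sup (Finset.mem_univ h)), hk'v⟩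
    · intro x hx y hy hxy
      rw [Finset.mem_filter] at hx hy
      exact hanti x hx.1 y hy.1 hxy
  -- Step 2: sum over d
  have hsum : ∑ d ∈ Icc 1 D, ∑ a ∈ A.filter (fun a => depth a = d), prob a
      ≤ ∑ u ∈ A, prob u := by
    have hmaps2 : ∀ a ∈ A.filter (fun a => depth a ∈ Icc 1 D), depth a ∈ Icc 1 D :=
      fun a ha => (Finset.mem_filter.mp ha).2
    have : ∑ d ∈ Icc 1 D, ∑ a ∈ (A.filter (fun a => depth a ∈ Icc 1 D)).filter
          (fun a => depth a = d), prob a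
        = ∑ a ∈ A.filter (fun a => depth a ∈ Icc 1 D), prob a :=
      Finset.sum_fiberwise_of_maps_to hmaps2 prob
    have heq : ∀ d ∈ Icc 1 D,
        (A.filter (fun a => depth a ∈ Icc 1 D)).filter (fun a => depth a = d)
          = A.filter (fun a => depth a = d) := by
      intro d hd
      ext a
      simp only [Finset.mem_filter]
      constructor
      · rintro ⟨⟨h1, _⟩, h3⟩; exact ⟨h1, h3⟩
      · rintro ⟨h1, h3⟩; exact ⟨⟨h1, h3 ▸ hd⟩, h3⟩
    calc ∑ d ∈ Icc 1 D, ∑ a ∈ A.filter (fun a => depth a = d), prob a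
        = ∑ d ∈ Icc 1 D, ∑ a ∈ (A.filter (fun a => depth a ∈ Icc 1 D)).filter
            (fun a => depth a = d), prob a :=
          Finset.sum_congr rfl (fun d hd => by rw [heq d hd])
      _ = ∑ a ∈ A.filter (fun a => depth a ∈ Icc 1 D), prob a := this
      _ ≤ ∑ u ∈ A, prob u :=
          Finset.sum_le_sum_of_subset_of_nonneg (Finset.filter_subset _ _)
            (fun i _ _ => hprob_nonneg i)
  have hlhs : (D : ℝ) * ∑ h ∈ H, prob h = ∑ d ∈ Icc 1 D, ∑ h ∈ H, prob h := by
    rw [Finset.sum_const, Nat.card_Icc]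
    simp [nsmul_eq_mul]
  rw [hlhs]
  exact le_trans (Finset.sum_le_sum key) hsum
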